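/- Let $F$ be a Montel locally convex space, $t_0\in\mathbb{R}$, $\varepsilon>0$, and let $\mathbf{F}:[t_0,t_0+\varepsilon]\to F$ be continuous. Assume that for every continuous linear functional $f'\in F'$, the scalar function $t\mapsto\langle f',\mathbf{F}(t)\rangle$ has a right derivative at $t_0$. Then $\mathbf{F}$ has a right derivative at $t_0$ in $F$ (i.e., $(t-t_0)^{-1}(\mathbf{F}(t)-\mathbf{F}(t_0))$ converges in $F$ as $t\to t_0^+$), and this derivative is the unique element $g\in F$ with $\langle f',g\rangle=\frac{d^+}{dt}\langle f',\mathbf{F}(t)\rangle\big|_{t=t_0}$ for all $f'\in F'$. -/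

import Mathlib

open Filter Set Topology

/-! ### Auxiliary: Hahn-Banach dual vector in a seminormed space -/

section SeminormedHB

variable {Z : Type*} [SeminormedAddCommGroup Z] [NormedSpace ℝ Z]

theorem exists_dual_vector_seminormed (x : Z) :
    ∃ g : Z →L[ℝ] ℝ, ‖g‖ ≤ 1 ∧ g x = ‖x‖ := by
  by_cases hx : ‖x‖ = 0
  · exact ⟨0, by simp, by simp [hx]⟩
  have hx0 : x ≠ 0 := by rintro rfl; exact hx norm_zero
  let c := LinearEquiv.coord ℝ Z x hx0
  let flin : (ℝ ∙ x) →ₗ[ℝ] ℝ := ‖x‖ • (c : (ℝ ∙ x) →ₗ[ℝ] ℝ)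
  have hb : ∀ v : (ℝ ∙ x), ‖flin v‖ ≤ 1 * ‖v‖ := by
    intro v
    have hv : c v • x = (v : Z) := LinearEquiv.coord_apply_smul ℝ Z x hx0 v
    have hnv : ‖(v : Z)‖ = |c v| * ‖x‖ := by
      rw [← hv, norm_smul, Real.norm_eq_abs]
    have h1 : ‖flin v‖ = ‖x‖ * |c v| := by
      simp only [flin, LinearMap.smul_apply, LinearEquiv.coe_coe, smul_eq_mul,
        Real.norm_eq_abs, abs_mul, abs_of_nonneg (norm_nonneg x)]
    have h2 : ‖v‖ = ‖(v : Z)‖ := rfl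
    rw [h1, one_mul, h2, hnv, mul_comm]
  let f : (ℝ ∙ x) →L[ℝ] ℝ := LinearMap.mkContinuous flin 1 hb
  obtain ⟨g, hg1, hg2⟩ := exists_extension_norm_eq (ℝ ∙ x) f
  refine ⟨g, ?_, ?_⟩
  · rw [hg2]; exact LinearMap.mkContinuous_norm_le _ zero_le_one _
  · have hm : x ∈ (ℝ ∙ x) := Submodule.mem_span_singleton_self x
    have hgx := hg1 ⟨x, hm⟩
    rw [Submodule.coe_mk] at hgx
    rw [hgx]
    have hc1 : c ⟨x, hm⟩ = 1 := LinearEquiv.coord_self ℝ Z x hx0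
    show flin ⟨x, hm⟩ = ‖x‖
    simp [flin, hc1]

/-- Uniform boundedness from weak boundedness, in a seminormed space:
an application of Banach–Steinhaus to the evaluations on the (complete) dual. -/
theorem norm_bound_of_dual_bound (S : Set Z)
    (h : ∀ ψ : Z →L[ℝ] ℝ, ∃ M, ∀ x ∈ S, |ψ x| ≤ M) :
    ∃ r, ∀ x ∈ S, ‖x‖ ≤ r := by
  have hpt : ∀ ψ : Z →L[ℝ] ℝ, ∃ C, ∀ s : S,
      ‖ContinuousLinearMap.apply ℝ ℝ (s : Z) ψ‖ ≤ C := by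
    intro ψ
    obtain ⟨M, hM⟩ := h ψ
    exact ⟨M, fun s => by simpa [Real.norm_eq_abs] using hM s s.2⟩
  obtain ⟨C, hC⟩ := banach_steinhaus
    (g := fun s : S => ContinuousLinearMap.apply ℝ ℝ (s : Z)) hpt
  refine ⟨C, fun x hx => ?_⟩
  obtain ⟨g, hg1, hg2⟩ := exists_dual_vector_seminormed x
  have h0C : (0 : ℝ) ≤ C :=
    le_trans (norm_nonneg _) (hC ⟨x, hx⟩)
  calc ‖x‖ = g x := hg2.symm
    _ ≤ ‖(ContinuousLinearMap.apply ℝ ℝ x : (Z →L[ℝ] ℝ) →L[ℝ] ℝ) g‖ := by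
        simp only [ContinuousLinearMap.apply_apply]
        exact le_abs_self _
    _ ≤ ‖(ContinuousLinearMap.apply ℝ ℝ x : (Z →L[ℝ] ℝ) →L[ℝ] ℝ)‖ * ‖g‖ :=
        ContinuousLinearMap.le_opNorm _ _
    _ ≤ C * 1 := mul_le_mul (hC ⟨x, hx⟩) hg1 (norm_nonneg _) h0C
    _ = C := mul_one C

end SeminormedHB

/-! ### A type synonym carrying the seminormed structure of a seminorm -/

section WithSem

variable {F : Type*} [AddCommGroup F] [Module ℝ F]

/-- Type synonym of `F`, to be equipped with the seminormed group structure coming from a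
seminorm `p`. -/
@[nolint unusedArguments]
def WithSem (_p : Seminorm ℝ F) : Type _ := F

variable (p : Seminorm ℝ F)

noncomputable instance : SeminormedAddCommGroup (WithSem p) :=
  letI : AddCommGroup (WithSem p) := inferInstanceAs (AddCommGroup F)
  AddGroupSeminorm.toSeminormedAddCommGroup
    (show AddGroupSeminorm (WithSem p) from p.toAddGroupSeminorm)

instance : Module ℝ (WithSem p) := inferInstanceAs (Module ℝ F)

noncomputable instance : NormedSpace ℝ (WithSem p) where
  norm_smul_le c x := by
    have : p (c • (show F from x)) = |c| * p (show F from x) := by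
      rw [map_smul_eq_mul]; rfl
    exact le_of_eq this

/-- The identity, from `F` to `WithSem p`. -/
def WithSem.mk : F → WithSem p := fun x => x

@[simp] lemma WithSem.norm_mk (x : F) : ‖WithSem.mk p x‖ = p x := rfl

lemma WithSem.mk_add (x y : F) :
    WithSem.mk p (x + y) = WithSem.mk p x + WithSem.mk p y := rfl

lemma WithSem.mk_smul (c : ℝ) (x : F) :
    WithSem.mk p (c • x) = c • WithSem.mk p x := rfl

lemma WithSem.continuous_mk [TopologicalSpace F] [IsTopologicalAddGroup F]
    (hp : Continuous p) : Continuous (WithSem.mk p) := by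
  rw [continuous_iff_continuousAt]
  intro x
  rw [ContinuousAt, Metric.tendsto_nhds]
  intro δ hδ
  have hsub : Continuous fun y : F => p (y - x) :=
    hp.comp (continuous_id.sub continuous_const)
  have h0 : Tendsto (fun y : F => p (y - x)) (𝓝 x) (𝓝 0) := by
    have := hsub.tendsto x
    simpa using this
  filter_upwards [h0.eventually_lt_const hδ] with y hy
  have : dist (WithSem.mk p y) (WithSem.mk p x) = p (y - x) := by
    rw [dist_eq_norm]; rfl
  rwa [this]

end WithSem

/-! ### Mackey's theorem (the direction we need): weakly bounded sets are bounded -/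

theorem isVonNBounded_of_weakly_bounded {F : Type*} [AddCommGroup F] [Module ℝ F]
    [TopologicalSpace F] [IsTopologicalAddGroup F] [ContinuousSMul ℝ F]
    [LocallyConvexSpace ℝ F]
    (S : Set F) (h : ∀ f' : F →L[ℝ] ℝ, ∃ M, ∀ x ∈ S, |f' x| ≤ M) :
    Bornology.IsVonNBounded ℝ S := by
  have hws := with_gaugeSeminormFamily (𝕜 := ℝ) (E := F)
  rw [hws.isVonNBounded_iff_seminorm_bounded]
  intro i
  set p := gaugeSeminormFamily ℝ F i with hpdef
  have hp : Continuous p := hws.continuous_seminorm i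
  have key : ∃ r, ∀ y ∈ WithSem.mk p '' S, ‖y‖ ≤ r := by
    apply norm_bound_of_dual_bound
    intro ψ
    let f' : F →L[ℝ] ℝ :=
      { toFun := fun x => ψ (WithSem.mk p x)
        map_add' := fun x y => by
          show ψ (WithSem.mk p (x + y)) = ψ (WithSem.mk p x) + ψ (WithSem.mk p y)
          rw [WithSem.mk_add, map_add]
        map_smul' := fun c x => by
          show ψ (WithSem.mk p (c • x)) = c • ψ (WithSem.mk p x)
          rw [WithSem.mk_smul, map_smul]
        cont := ψ.continuous.comp (WithSem.continuous_mk p hp) }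
    obtain ⟨M, hM⟩ := h f'
    refine ⟨M, ?_⟩
    rintro y ⟨x, hx, rfl⟩
    exact hM x hx
  obtain ⟨r, hr⟩ := key
  refine ⟨max r 0 + 1, by positivity, fun x hx => ?_⟩
  have hpx : p x ≤ r := hr _ ⟨x, hx, rfl⟩
  calc p x ≤ r := hpx
    _ ≤ max r 0 := le_max_left _ _
    _ < max r 0 + 1 := lt_add_one _

/-- Let `F` be a Montel locally convex space (barrelled, locally convex,
Hausdorff, with bounded sets relatively compact). If `Fmap : [t₀, t₀+ε] → F` is continuous
and for every continuous linear functional `f'` the scalar function `t ↦ f'(Fmap t)` has a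
right derivative at `t₀`, then `Fmap` has a right derivative `g` at `t₀` in `F`, the element
`g` being uniquely determined by `f'(g) = (d⁺/dt) f'(Fmap t)|_{t=t₀}` for all `f'`. -/
theorem stmt12 (F : Type*) [AddCommGroup F] [Module ℝ F] [TopologicalSpace F]
    [IsTopologicalAddGroup F] [ContinuousSMul ℝ F] [LocallyConvexSpace ℝ F] [T2Space F]
    [BarrelledSpace ℝ F]
    (hMontel : ∀ s : Set F, Bornology.IsVonNBounded ℝ s → IsCompact (closure s))
    (t₀ ε : ℝ) (hε : 0 < ε) (Fmap : ℝ → F)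
    (hcont : ContinuousOn Fmap (Set.Icc t₀ (t₀ + ε)))
    (hscalar : ∀ f' : F →L[ℝ] ℝ, ∃ L : ℝ,
      HasDerivWithinAt (fun t => f' (Fmap t)) L (Set.Ici t₀) t₀) :
    ∃ g : F,
      Tendsto (fun t => (t - t₀)⁻¹ • (Fmap t - Fmap t₀)) (nhdsWithin t₀ (Set.Ioi t₀)) (nhds g) ∧
      (∀ f' : F →L[ℝ] ℝ, HasDerivWithinAt (fun t => f' (Fmap t)) (f' g) (Set.Ici t₀) t₀) ∧
      (∀ g' : F,
        (∀ f' : F →L[ℝ] ℝ, HasDerivWithinAt (fun t => f' (Fmap t)) (f' g') (Set.Ici t₀) t₀) →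
        g' = g) := by
  classical
  choose L hL using hscalar
  set φ : ℝ → F := fun t => (t - t₀)⁻¹ • (Fmap t - Fmap t₀) with hφ
  -- scalar difference quotients converge
  have hslope : ∀ f' : F →L[ℝ] ℝ,
      Tendsto (fun t => f' (φ t)) (𝓝[>] t₀) (𝓝 (L f')) := by
    intro f'
    have hd := hL f'
    rw [hasDerivWithinAt_iff_tendsto_slope, Set.Ici_sdiff_left] at hd
    refine hd.congr fun t => ?_
    simp [slope_def_module, hφ, map_sub, map_smul, smul_eq_mul]
  -- weak boundedness of the difference quotients on `Ioc t₀ (t₀+ε)`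
  have hwb : ∀ f' : F →L[ℝ] ℝ, ∃ M, ∀ x ∈ φ '' Ioc t₀ (t₀ + ε), |f' x| ≤ M := by
    intro f'
    obtain ⟨δ, hδ, hnear⟩ : ∃ δ, t₀ < δ ∧ ∀ t ∈ Ioc t₀ δ, |f' (φ t)| ≤ |L f'| + 1 := by
      have hev : ∀ᶠ t in 𝓝[>] t₀, |f' (φ t)| ≤ |L f'| + 1 := by
        have h1 := Metric.tendsto_nhds.mp (hslope f') 1 one_pos
        filter_upwards [h1] with t ht
        rw [Real.dist_eq] at ht
        calc |f' (φ t)| = |(f' (φ t) - L f') + L f'| := by ring_nf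
          _ ≤ |f' (φ t) - L f'| + |L f'| := abs_add_le _ _
          _ ≤ |L f'| + 1 := by linarith [ht.le]
      obtain ⟨u, hu, hsub⟩ := mem_nhdsGT_iff_exists_Ioc_subset.1 hev
      exact ⟨u, hu, fun t ht => hsub ht⟩
    set a := min δ (t₀ + ε) with ha
    have hta : t₀ < a := lt_min hδ (by linarith)
    have hsub2 : Icc a (t₀ + ε) ⊆ Icc t₀ (t₀ + ε) :=
      Icc_subset_Icc hta.le le_rfl
    have hφcont : ContinuousOn (fun t => f' (φ t)) (Icc a (t₀ + ε)) := by
      apply f'.continuous.comp_continuousOn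
      apply ContinuousOn.smul
      · apply ContinuousOn.inv₀
        · exact (continuousOn_id.sub continuousOn_const)
        · intro t ht
          exact sub_ne_zero.2 (ne_of_gt (lt_of_lt_of_le hta ht.1))
      · exact (hcont.mono hsub2).sub continuousOn_const
    obtain ⟨M₂, hM₂⟩ := isCompact_Icc.exists_bound_of_continuousOn hφcont
    refine ⟨max (|L f'| + 1) M₂, ?_⟩
    rintro x ⟨t, ht, rfl⟩
    by_cases htδ : t ≤ δ
    · exact le_trans (hnear t ⟨ht.1, htδ⟩) (le_max_left _ _)
    · push_neg at htδ
      have h1 : a ≤ t := le_trans (min_le_left _ _) htδ.le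
      have := hM₂ t ⟨h1, ht.2⟩
      rw [Real.norm_eq_abs] at this
      exact le_trans this (le_max_right _ _)
  -- boundedness and compactness
  have hbdd : Bornology.IsVonNBounded ℝ (φ '' Ioc t₀ (t₀ + ε)) :=
    isVonNBounded_of_weakly_bounded _ hwb
  have hK : IsCompact (closure (φ '' Ioc t₀ (t₀ + ε))) := hMontel _ hbdd
  set K := closure (φ '' Ioc t₀ (t₀ + ε)) with hKdef
  have hmem : ∀ᶠ t in 𝓝[>] t₀, φ t ∈ K := by
    have hIoc : Ioc t₀ (t₀ + ε) ∈ 𝓝[>] t₀ :=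
      Ioc_mem_nhdsGT_of_mem ⟨le_refl t₀, by linarith⟩
    filter_upwards [hIoc] with t ht
    exact subset_closure (mem_image_of_mem φ ht)
  -- every cluster point of the quotients pairs to `L` against every functional
  have hclu : ∀ x, MapClusterPt x (𝓝[>] t₀) φ → ∀ f' : F →L[ℝ] ℝ, f' x = L f' := by
    intro x hx f'
    have h2 : ClusterPt (f' x) (map f' (map φ (𝓝[>] t₀))) :=
      (hx : ClusterPt x (map φ (𝓝[>] t₀))).map f'.continuous.continuousAt tendsto_map
    have h3 : map f' (map φ (𝓝[>] t₀)) ≤ 𝓝 (L f') := by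
      rw [Filter.map_map]; exact hslope f'
    exact eq_of_nhds_neBot (h2.mono h3)
  -- existence of a cluster point in the compact set
  have hKmem : K ∈ map φ (𝓝[>] t₀) := mem_map.2 hmem
  obtain ⟨g, hgK, hg⟩ := hK.exists_clusterPt (le_principal_iff.2 hKmem)
  have hgall : ∀ f' : F →L[ℝ] ℝ, f' g = L f' := hclu g hg
  -- uniqueness of cluster points
  have huniq : ∀ x ∈ K, MapClusterPt x (𝓝[>] t₀) φ → x = g := by
    intro x _ hx
    by_contra hne
    obtain ⟨f', hf'⟩ := SeparatingDual.exists_separating_of_ne (R := ℝ) hne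
    exact hf' (by rw [hclu x hx f', hgall f'])
  have htend : Tendsto φ (𝓝[>] t₀) (𝓝 g) :=
    hK.tendsto_nhds_of_unique_mapClusterPt hmem huniq
  refine ⟨g, htend, ?_, ?_⟩
  · intro f'
    rw [hgall f']
    exact hL f'
  · intro g' hg'
    have hval : ∀ f' : F →L[ℝ] ℝ, f' g' = f' g := by
      intro f'
      have h1 := (hg' f').derivWithin (uniqueDiffOn_Ici t₀ t₀ Set.self_mem_Ici)
      have h2 := (hL f').derivWithin (uniqueDiffOn_Ici t₀ t₀ Set.self_mem_Ici)
      rw [hgall f', ← h2, h1]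
    by_contra hne
    obtain ⟨f', hf'⟩ := SeparatingDual.exists_separating_of_ne (R := ℝ) hne
    exact hf' (hval f')
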